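/- Let G be a connected graph without cut vertices, let {u, v} be a separation pair of G, and let C be a connected component of G - {u, v}. Then there is a uv-path in G all of whose internal vertices belong to C. -/

import Mathlib

open SimpleGraph

variable {V : Type*}

/-- Reachability within the subgraph of `G` induced by the vertex set `W`. -/
def ReachIn (G : SimpleGraph V) (W : Set V) (x y : V) : Prop :=
  ∃ (hx : x ∈ W) (hy : y ∈ W), (G.induce W).Reachable ⟨x, hx⟩ ⟨y, hy⟩

/-- Removing `S` disconnects some connected component of `G`: there are two vertices
outside `S` that are connected in `G` but not in `G - S`. -/
def Separates (G : SimpleGraph V) (S : Set V) : Prop :=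
  ∃ u v : V, u ∉ S ∧ v ∉ S ∧ G.Reachable u v ∧ ¬ ReachIn G Sᶜ u v

/-- `S` is a minimal separator of `G`. -/
def IsMinimalSeparator (G : SimpleGraph V) (S : Set V) : Prop :=
  Separates G S ∧ ∀ S' ⊂ S, ¬ Separates G S'

/-- `C` is a connected component of the subgraph of `G` induced by `W`. -/
def IsCompOf (G : SimpleGraph V) (C W : Set V) : Prop :=
  C ⊆ W ∧ (G.induce C).Connected ∧ ∀ u ∈ C, ∀ v ∈ W, G.Adj u v → v ∈ C

/-- A separation `(A, B)` of a graph `G`. -/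
def IsSeparation (G : SimpleGraph V) (A B : Set V) : Prop :=
  A ∪ B = Set.univ ∧ ∀ u ∈ A \ B, ∀ v ∈ B \ A, ¬ G.Adj u v

/-- `(T, X)` is a tree decomposition of `G`. -/
structure IsTreeDecomp {ι : Type*} (G : SimpleGraph V) (T : SimpleGraph ι)
    (X : ι → Set V) : Prop where
  isTree : T.IsTree
  covers_verts : ∀ v : V, ∃ i, v ∈ X i
  covers_edges : ∀ ⦃u v : V⦄, G.Adj u v → ∃ i, u ∈ X i ∧ v ∈ X i
  subtree : ∀ v : V, (T.induce {i | v ∈ X i}).Connected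

/-- The tree decomposition given by the bag function `X` has adhesion at most `d`. -/
def AdhesionLE {ι : Type*} (T : SimpleGraph ι) (X : ι → Set V) (d : ℕ) : Prop :=
  ∀ ⦃i j : ι⦄, T.Adj i j → (X i ∩ X j).ncard ≤ d

/-- The torso of the vertex set `W` in `G`: the induced subgraph `G[W]` with an edge added
between each pair of vertices of `W` connected by a path internally avoiding `W`. -/
def torso (G : SimpleGraph V) (W : Set V) : SimpleGraph W :=
  SimpleGraph.fromRel (fun u v =>
    G.Adj u v ∨ ∃ p : G.Walk (u : V) (v : V), p.IsPath ∧
      ∀ z ∈ p.support, z ≠ (u : V) → z ≠ (v : V) → z ∉ W)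

/-- One smoothing step: `K` is obtained from `H` by replacing the degree-2 vertex `v`,
whose two neighbors are `a` and `b`, by a direct edge between `a` and `b`. -/
def SmoothStep (H K : SimpleGraph.Subgraph (⊤ : SimpleGraph V)) : Prop :=
  ∃ v a b : V, a ≠ b ∧ a ≠ v ∧ b ≠ v ∧ v ∈ H.verts ∧ H.neighborSet v = {a, b} ∧
    K.verts = H.verts \ {v} ∧
    ∀ x y : V, K.Adj x y ↔ ((H.Adj x y ∧ x ≠ v ∧ y ≠ v) ∨ (x = a ∧ y = b) ∨ (x = b ∧ y = a))

/-- `K` (a graph on a subset of the vertices of `G`) is a topological minor of `G`: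
it is obtained from a subgraph of `G` by repeatedly smoothing degree-2 vertices. -/
def IsTopMinor (K : SimpleGraph.Subgraph (⊤ : SimpleGraph V)) (G : SimpleGraph V) : Prop :=
  ∃ H₀ : SimpleGraph.Subgraph (⊤ : SimpleGraph V),
    (∀ ⦃x y : V⦄, H₀.Adj x y → G.Adj x y) ∧ Relation.ReflTransGen SmoothStep H₀ K

/-- An abstract graph `H` is a topological minor of `G` if it is isomorphic to some
topological minor of `G`. -/
def IsTopMinorGraph {W : Type*} (H : SimpleGraph W) (G : SimpleGraph V) : Prop :=
  ∃ K : SimpleGraph.Subgraph (⊤ : SimpleGraph V), IsTopMinor K G ∧ Nonempty (H ≃g K.coe)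

/-- One edge-contraction step: `K` is obtained from `H` by contracting the edge `{a, b}`
(the vertex `b` is merged into `a`). -/
def ContractStep (H K : SimpleGraph.Subgraph (⊤ : SimpleGraph V)) : Prop :=
  ∃ a b : V, H.Adj a b ∧ K.verts = H.verts \ {b} ∧
    ∀ x y : V, K.Adj x y ↔ (x ≠ b ∧ y ≠ b ∧ x ≠ y ∧
      (H.Adj x y ∨ (x = a ∧ H.Adj b y) ∨ (y = a ∧ H.Adj x b)))

/-- `G` contains `Hpat` as a minor: some graph obtained from a subgraph of `G` by
contracting edges is isomorphic to `Hpat`. -/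
def HasMinor {W : Type*} (G : SimpleGraph V) (Hpat : SimpleGraph W) : Prop :=
  ∃ H₀ K : SimpleGraph.Subgraph (⊤ : SimpleGraph V),
    (∀ ⦃x y : V⦄, H₀.Adj x y → G.Adj x y) ∧ Relation.ReflTransGen ContractStep H₀ K ∧
      Nonempty (Hpat ≃g K.coe)

/-- Planarity, via Wagner's theorem: no `K₅`-minor and no `K₃,₃`-minor. -/
def IsPlanar (G : SimpleGraph V) : Prop :=
  ¬ HasMinor G (completeGraph (Fin 5)) ∧ ¬ HasMinor G (completeBipartiteGraph (Fin 3) (Fin 3))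

/-- A graph is triconnected if removing fewer than three vertices cannot disconnect it. -/
def Triconnected (G : SimpleGraph V) : Prop :=
  ∀ S : Set V, S.ncard < 3 → (G.induce Sᶜ).Preconnected

/-- A graph is claw-free if it has no induced `K_{1,3}`. -/
def ClawFree (G : SimpleGraph V) : Prop :=
  ∀ v a b c : V, G.Adj v a → G.Adj v b → G.Adj v c → a ≠ b → a ≠ c → b ≠ c →
    ¬ G.Adj a b → ¬ G.Adj a c → G.Adj b c

lemma walk_stays {G : SimpleGraph V} {W S : Set V}
    (hclosed : ∀ a ∈ S, ∀ b ∈ W, G.Adj a b → b ∈ S)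
    {a b : W} (p : (G.induce W).Walk a b) (ha : (a : V) ∈ S) : (b : V) ∈ S := by
  induction p with
  | nil => exact ha
  | cons h p ih => exact ih (hclosed _ ha _ (Subtype.mem _) h)

lemma reachIn_mono {G : SimpleGraph V} {S W : Set V} (hSW : S ⊆ W) {x y : V}
    (hx : x ∈ S) (hy : y ∈ S) (h : (G.induce S).Reachable ⟨x, hx⟩ ⟨y, hy⟩) :
    ReachIn G W x y :=
  ⟨hSW hx, hSW hy, h.map ⟨Set.inclusion hSW, fun h => h⟩⟩

lemma nbr_in_comp {G : SimpleGraph V} {u v : V}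
    (hconn : G.Connected) (hnocut : ∀ w : V, ¬ Separates G {w})
    {C : Set V} (hC : IsCompOf G C {u, v}ᶜ)
    {w : V} (hw : w ∉ C) (hwv : w ≠ v) :
    ∃ c ∈ C, G.Adj u c := by
  by_contra hno
  push_neg at hno
  obtain ⟨⟨c, hc⟩⟩ := hC.2.1.nonempty
  apply hnocut v
  refine ⟨c, w, ?_, ?_, hconn c w, ?_⟩
  · simp only [Set.mem_singleton_iff]
    intro h; exact (hC.1 hc) (by simp [h])
  · simpa using hwv
  · rintro ⟨hc', hw', ⟨p⟩⟩
    apply hw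
    refine walk_stays (W := ({v} : Set V)ᶜ) (S := C) ?_ p hc
    intro a ha b hb hab
    by_cases hbu : b = u
    · exact absurd (hab.symm) (fun h => hno a ha (hbu ▸ h))
    · refine hC.2.2 a ha b ?_ hab
      simp only [Set.mem_compl_iff, Set.mem_insert_iff, Set.mem_singleton_iff]
      push_neg
      exact ⟨hbu, by simpa using hb⟩

/-- In a connected graph without cut vertices with separation pair `{u, v}`, every
connected component `C` of `G - {u, v}` admits a `uv`-path whose internal vertices all
belong to `C`. -/
theorem uvPath_through_component [Fintype V] (G : SimpleGraph V)
    (hconn : G.Connected) (hnocut : ∀ w : V, ¬ Separates G {w})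
    (u v : V) (huv : u ≠ v) (hsp : Separates G {u, v})
    (C : Set V) (hC : IsCompOf G C {u, v}ᶜ) :
    ∃ p : G.Walk u v, p.IsPath ∧ ∀ z ∈ p.support, z ≠ u → z ≠ v → z ∈ C := by
  classical
  -- find a vertex outside C ∪ {u,v}
  obtain ⟨x, y, hx, hy, hxy, hnr⟩ := hsp
  have hwitness : ∃ w, w ∉ C ∧ w ∉ ({u, v} : Set V) := by
    by_cases hxC : x ∈ C
    · by_cases hyC : y ∈ C
      · exfalso
        apply hnr
        exact reachIn_mono hC.1 hxC hyC
          ((hC.2.1.preconnected) ⟨x, hxC⟩ ⟨y, hyC⟩)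
      · exact ⟨y, hyC, hy⟩
    · exact ⟨x, hxC, hx⟩
  obtain ⟨w, hwC, hwuv⟩ := hwitness
  simp only [Set.mem_insert_iff, Set.mem_singleton_iff] at hwuv
  push_neg at hwuv
  -- neighbor of u in C
  obtain ⟨cu, hcu, haucu⟩ := nbr_in_comp hconn hnocut hC hwC hwuv.2
  -- neighbor of v in C (swap roles)
  have hC' : IsCompOf G C {v, u}ᶜ := by rwa [Set.pair_comm] at hC
  obtain ⟨cv, hcv, havcv⟩ := nbr_in_comp hconn hnocut hC' hwC hwuv.1
  -- path inside C between cu and cv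
  obtain ⟨q⟩ := (hC.2.1.preconnected) ⟨cu, hcu⟩ ⟨cv, hcv⟩
  let f : G.induce C →g G := ⟨Subtype.val, fun h => h⟩
  have hqsupp : ∀ z ∈ (q.map f).support, z ∈ C := by
    intro z hz
    rw [Walk.support_map] at hz
    obtain ⟨⟨z', hz'⟩, _, rfl⟩ := List.mem_map.mp hz
    exact hz'
  let p0 : G.Walk u v := Walk.cons haucu ((q.map f).concat havcv.symm)
  refine ⟨p0.toPath, (p0.toPath).2, ?_⟩
  intro z hz hzu hzv
  have hz0 : z ∈ p0.support := Walk.support_toPath_subset p0 hz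
  simp only [p0, Walk.support_cons, List.mem_cons, Walk.support_concat,
    List.concat_eq_append, List.mem_append, List.mem_singleton] at hz0
  rcases hz0 with rfl | hz0 | (rfl | h)
  · exact absurd rfl hzu
  · exact hqsupp z hz0
  · exact absurd rfl hzv
  · exact absurd h List.not_mem_nil
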